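/- For every u ∈ L^p(ℝⁿ₊) and every v ∈ L^q(ℝⁿ₊), where 1/p + 1/q = 1, one has ∫_{ℝⁿ₊} (R_s ⊗ S_s)u(x) v(x) dx → 0 as s → ∞; that is, (R_s ⊗ S_s)u converges to 0 in the weak topology of L^p(ℝⁿ₊). -/

import Mathlib

/-!
Statement 12: For every u ∈ L^p(ℝⁿ₊) and every v ∈ L^q(ℝⁿ₊), 1/p + 1/q = 1,
∫_{ℝⁿ₊} (R_s ⊗ S_s)u · v → 0 as s → ∞, i.e. (R_s ⊗ S_s)u → 0 weakly in L^p(ℝⁿ₊),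
where (R_s ⊗ S_s)u(x', x_n) = s^{τ(n−1)/p + 1/p} e^{i s x'·η} u(s^τ(x' − y), s x_n)
and ℝⁿ₊ is modeled as ℝ^k × (0,∞), k = n − 1.
-/

open MeasureTheory Real Complex Filter Topology ENNReal

noncomputable section

abbrev En (k : ℕ) := EuclideanSpace ℝ (Fin k)

/-- The operator `R_s ⊗ S_s` on functions on the half space `ℝ^k × ℝ₊`. -/
def RSop (k : ℕ) (p τ : ℝ) (y η : En k) (s : ℝ) (u : En k × ℝ → ℂ) : En k × ℝ → ℂ :=
  fun q => ((s ^ (τ * k / p + 1 / p) : ℝ) : ℂ) *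
    Complex.exp (Complex.I * (s : ℂ) * ((inner ℝ q.1 η : ℝ) : ℂ)) *
    u ((s ^ τ : ℝ) • (q.1 - y), s * q.2)

/-- Half space above level `c`. -/
def Sset (k : ℕ) (c : ℝ) : Set (En k × ℝ) := {q : En k × ℝ | c < q.2}

lemma Sset_measurable (k : ℕ) (c : ℝ) : MeasurableSet (Sset k c) :=
  measurableSet_lt measurable_const measurable_snd

lemma Sset_mono (k : ℕ) {c d : ℝ} (h : c ≤ d) : Sset k d ⊆ Sset k c :=
  fun _ hx => lt_of_le_of_lt h hx

/-- The underlying affine change of variables of `RSop`. -/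
def Tmap (k : ℕ) (τ s : ℝ) (y : En k) : En k × ℝ → En k × ℝ :=
  fun x => ((s ^ τ : ℝ) • (x.1 - y), s * x.2)

lemma Tmap_measurable (k : ℕ) (τ s : ℝ) (y : En k) : Measurable (Tmap k τ s y) :=
  by unfold Tmap; fun_prop

lemma smul_prod_smul {α β : Type*} [MeasurableSpace α] [MeasurableSpace β]
    (μ : Measure α) (ν : Measure β) [SigmaFinite μ] [SigmaFinite ν] (a b : ℝ) :
    (ENNReal.ofReal a • μ).prod (ENNReal.ofReal b • ν)
      = (ENNReal.ofReal a * ENNReal.ofReal b) • (μ.prod ν) := by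
  haveI h1 : SigmaFinite (ENNReal.ofReal a • μ) := by
    have : ENNReal.ofReal a • μ = a.toNNReal • μ := rfl
    rw [this]; infer_instance
  haveI h2 : SigmaFinite (ENNReal.ofReal b • ν) := by
    have : ENNReal.ofReal b • ν = b.toNNReal • ν := rfl
    rw [this]; infer_instance
  refine Measure.prod_eq (μ := ENNReal.ofReal a • μ) (ν := ENNReal.ofReal b • ν)
    fun s t hs ht => ?_
  simp only [Measure.prod_prod, Measure.smul_apply, smul_eq_mul]
  ring

lemma Tmap_map (k : ℕ) {τ s : ℝ} (hs : 0 < s) (y : En k) :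
    Measure.map (Tmap k τ s y) (volume : Measure (En k × ℝ)) =
      ENNReal.ofReal ((((s : ℝ) ^ τ) ^ k)⁻¹ * s⁻¹) • volume := by
  set r : ℝ := s ^ τ with hrdef
  have hr : 0 < r := Real.rpow_pos_of_pos hs τ
  have hT1 : Measurable (fun x : En k => r • (x + -y)) :=
    by fun_prop
  have hT2 : Measurable (fun t : ℝ => s * t) := measurable_id.const_mul s
  have hTeq : Tmap k τ s y = Prod.map (fun x : En k => r • (x + -y)) (fun t : ℝ => s * t) := by
    funext x
    simp [Tmap, Prod.map, sub_eq_add_neg, hrdef]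
  have h1 : Measure.map (fun x : En k => r • (x + -y)) volume
      = ENNReal.ofReal ((r ^ k)⁻¹) • volume := by
    have hcomp : (fun x : En k => r • (x + -y)) = (fun x : En k => r • x) ∘ fun x => x + -y :=
      rfl
    rw [hcomp, ← Measure.map_map (measurable_const_smul r) (measurable_add_const (-y)),
      map_add_right_eq_self volume (-y), Measure.map_addHaar_smul (volume : Measure (En k)) hr.ne']
    congr 1
    rw [finrank_euclideanSpace_fin, _root_.abs_of_nonneg (by positivity)]
  have h2 : Measure.map (fun t : ℝ => s * t) volume = ENNReal.ofReal (s⁻¹) • volume := by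
    rw [Real.map_volume_mul_left hs.ne']
    congr 1
    rw [_root_.abs_of_nonneg (by positivity)]
  rw [hTeq, Measure.volume_eq_prod, ← Measure.map_prod_map _ _ hT1 hT2, h1, h2,
    smul_prod_smul, ← ENNReal.ofReal_mul (by positivity)]

lemma cov (k : ℕ) {τ s : ℝ} (hs : 0 < s) (y : En k)
    {g : En k × ℝ → ℝ≥0∞} (hg : Measurable g) (c : ℝ) :
    ∫⁻ x in Sset k c, g (Tmap k τ s y x) ∂volume =
      ENNReal.ofReal ((((s : ℝ) ^ τ) ^ k)⁻¹ * s⁻¹) * ∫⁻ x in Sset k (s * c), g x ∂volume := by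
  have hS : MeasurableSet (Sset k (s * c)) := Sset_measurable k _
  have hpre : Sset k c = Tmap k τ s y ⁻¹' Sset k (s * c) := by
    ext x
    simp only [Sset, Set.mem_setOf_eq, Set.mem_preimage, Tmap]
    exact (mul_lt_mul_iff_right₀ hs).symm
  rw [hpre, ← setLIntegral_map hS hg (Tmap_measurable k τ s y), Tmap_map k hs y,
    Measure.restrict_smul, lintegral_smul_measure, smul_eq_mul]

theorem statement_12 (k : ℕ) (p q τ : ℝ) (hp : 1 < p) (hpq : 1 / p + 1 / q = 1)
    (hτ : 0 < τ) (hτ3 : τ < 1 / 3) (y η : En k)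
    (u v : En k × ℝ → ℂ)
    (hu : MemLp u (ENNReal.ofReal p) (volume.restrict {q : En k × ℝ | 0 < q.2}))
    (hv : MemLp v (ENNReal.ofReal q) (volume.restrict {q : En k × ℝ | 0 < q.2})) :
    Tendsto
      (fun s : ℝ => ∫ x in {q : En k × ℝ | 0 < q.2}, RSop k p τ y η s u x * v x)
      atTop (𝓝 0) := by
  classical
  have hp0 : (0 : ℝ) < p := lt_trans one_pos hp
  have hpq' : p.HolderConjugate q := Real.holderConjugate_iff.mpr ⟨hp, by simpa only [one_div] using hpq⟩
  have hq0 : 0 < q := hpq'.symm.left_pos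
  -- The sets `{q | 0 < q.2}` in the statement are `Sset k 0`.
  have hu' : MemLp u (ENNReal.ofReal p) (volume.restrict (Sset k 0)) := hu
  have hv' : MemLp v (ENNReal.ofReal q) (volume.restrict (Sset k 0)) := hv
  -- A measurable representative of `u`.
  set u₀ : En k × ℝ → ℂ := hu'.1.mk u with hu₀def
  have hu₀m : StronglyMeasurable u₀ := hu'.1.stronglyMeasurable_mk
  have huu₀ : u =ᵐ[volume.restrict (Sset k 0)] u₀ := hu'.1.ae_eq_mk
  have hP0 : (ENNReal.ofReal p) ≠ 0 := by
    simp only [ne_eq, ENNReal.ofReal_eq_zero, not_le]; exact hp0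
  have hPto : (ENNReal.ofReal p).toReal = p := ENNReal.toReal_ofReal hp0.le
  have hQ0 : (ENNReal.ofReal q) ≠ 0 := by
    simp only [ne_eq, ENNReal.ofReal_eq_zero, not_le]; exact hq0
  have hQto : (ENNReal.ofReal q).toReal = q := ENNReal.toReal_ofReal hq0.le
  -- The `p`-mass of `u₀` above level `c`.
  set Iu : ℝ → ℝ≥0∞ := fun c => ∫⁻ x in Sset k c, (‖u₀ x‖₊ : ℝ≥0∞) ^ p ∂volume with hIudef
  have hIumono : ∀ {c d : ℝ}, c ≤ d → Iu d ≤ Iu c := fun h =>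
    lintegral_mono_set (Sset_mono k h)
  have hIu0 : Iu 0 ≠ ⊤ := by
    have h2 := hu'.2
    rw [eLpNorm_eq_lintegral_rpow_enorm_toReal hP0 ENNReal.ofReal_ne_top, hPto] at h2
    simp only [enorm_eq_nnnorm] at h2
    have hne : (∫⁻ x, (‖u x‖₊ : ℝ≥0∞) ^ p ∂(volume.restrict (Sset k 0))) ≠ ⊤ := by
      intro htop
      rw [htop, ENNReal.top_rpow_of_pos (by positivity : (0:ℝ) < 1 / p)] at h2
      exact (lt_irrefl _ h2).elim
    have hcongr : (∫⁻ x, (‖u x‖₊ : ℝ≥0∞) ^ p ∂(volume.restrict (Sset k 0)))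
        = ∫⁻ x, (‖u₀ x‖₊ : ℝ≥0∞) ^ p ∂(volume.restrict (Sset k 0)) :=
      lintegral_congr_ae (huu₀.mono fun x hx => by simp only [hx])
    have : Iu 0 = ∫⁻ x, (‖u x‖₊ : ℝ≥0∞) ^ p ∂(volume.restrict (Sset k 0)) := hcongr.symm
    rw [this]; exact hne
  -- The `q`-mass of `v` on a set.
  set Jv : Set (En k × ℝ) → ℝ≥0∞ :=
    fun A => ∫⁻ x in A, (‖v x‖₊ : ℝ≥0∞) ^ q ∂volume with hJvdef
  have hJv0 : Jv (Sset k 0) ≠ ⊤ := by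
    have h2 := hv'.2
    rw [eLpNorm_eq_lintegral_rpow_enorm_toReal hQ0 ENNReal.ofReal_ne_top, hQto] at h2
    simp only [enorm_eq_nnnorm] at h2
    intro htop
    have htop' : (∫⁻ x in Sset k 0, (‖v x‖₊ : ℝ≥0∞) ^ q ∂volume) = ⊤ := htop
    rw [htop', ENNReal.top_rpow_of_pos (by positivity : (0:ℝ) < 1 / q)] at h2
    exact (lt_irrefl _ h2).elim
  -- Tail smallness of `Iu`.
  have htail : ∀ ε' : ℝ≥0∞, 0 < ε' → ∃ c0 : ℝ, 0 ≤ c0 ∧ ∀ c, c0 ≤ c → Iu c < ε' := by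
    intro ε' hε'
    set μu : Measure (En k × ℝ) :=
      (volume.restrict (Sset k 0)).withDensity (fun x => (‖u₀ x‖₊ : ℝ≥0∞) ^ p) with hμudef
    have hμuS : ∀ {c : ℝ}, 0 ≤ c → μu (Sset k c) = Iu c := by
      intro c hc
      rw [hμudef, withDensity_apply _ (Sset_measurable k c),
        Measure.restrict_restrict (Sset_measurable k c),
        Set.inter_eq_self_of_subset_left (Sset_mono k hc)]
    have hmeas : Tendsto (fun n : ℕ => μu (Sset k n)) atTop
        (𝓝 (μu (⋂ n : ℕ, Sset k n))) := by
      refine tendsto_measure_iInter_atTop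
        (fun n => (Sset_measurable k _).nullMeasurableSet) ?_ ⟨0, ?_⟩
      · intro m n hmn
        exact Sset_mono k (by exact_mod_cast hmn)
      · rw [Nat.cast_zero, hμuS le_rfl]
        exact hIu0
    have hempty : (⋂ n : ℕ, Sset k n) = ∅ := by
      ext x
      simp only [Set.mem_iInter, Set.mem_empty_iff_false, iff_false, not_forall]
      obtain ⟨n, hn⟩ := exists_nat_gt x.2
      exact ⟨n, fun hmem => absurd hmem (by simp only [Sset, Set.mem_setOf_eq, not_lt]; exact hn.le)⟩
    rw [hempty, measure_empty] at hmeas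
    obtain ⟨N, hN⟩ := eventually_atTop.1 (hmeas.eventually_lt_const hε')
    refine ⟨(N : ℝ), Nat.cast_nonneg N, fun c hc => ?_⟩
    have h1 : Iu c ≤ Iu (N : ℝ) := hIumono hc
    have h2 : Iu (N : ℝ) < ε' := by
      rw [← hμuS (Nat.cast_nonneg N)]
      exact hN N le_rfl
    exact lt_of_le_of_lt h1 h2
  -- Smallness of `Jv` near the boundary.
  have hsmall : ∀ ε' : ℝ≥0∞, 0 < ε' → ∃ δ : ℝ, 0 < δ ∧ Jv (Sset k 0 \ Sset k δ) < ε' := by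
    intro ε' hε'
    set μv : Measure (En k × ℝ) :=
      (volume.restrict (Sset k 0)).withDensity (fun x => (‖v x‖₊ : ℝ≥0∞) ^ q) with hμvdef
    have hμvA : ∀ {A : Set (En k × ℝ)}, MeasurableSet A → A ⊆ Sset k 0 → μv A = Jv A := by
      intro A hA hsub
      rw [hμvdef, withDensity_apply _ hA, Measure.restrict_restrict hA,
        Set.inter_eq_self_of_subset_left hsub]
    have hC : ∀ n : ℕ, MeasurableSet (Sset k 0 \ Sset k (1 / (n + 1 : ℝ))) :=
      fun n => (Sset_measurable k 0).diff (Sset_measurable k _)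
    have hanti : Antitone fun n : ℕ => Sset k 0 \ Sset k (1 / (n + 1 : ℝ)) := by
      intro m n hmn
      apply Set.diff_subset_diff_right
      apply Sset_mono
      apply one_div_le_one_div_of_le
      · positivity
      · exact_mod_cast Nat.succ_le_succ hmn
    have hiInter : (⋂ n : ℕ, Sset k 0 \ Sset k (1 / (n + 1 : ℝ))) = ∅ := by
      ext x
      simp only [Set.mem_iInter, Set.mem_diff, Set.mem_empty_iff_false, iff_false, not_forall]
      by_cases hx : (0 : ℝ) < x.2
      · obtain ⟨n, hn⟩ := exists_nat_one_div_lt hx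
        exact ⟨n, fun hmem => hmem.2 (by simpa [Sset] using hn)⟩
      · exact ⟨0, fun hmem => hx hmem.1⟩
    have hμvfin : μv (Sset k 0 \ Sset k (1 / ((0 : ℕ) + 1 : ℝ))) ≠ ⊤ := by
      rw [hμvA (hC 0) Set.diff_subset]
      intro htop
      apply hJv0
      refine top_unique ?_
      rw [← htop]
      exact lintegral_mono_set Set.diff_subset
    have hmeas : Tendsto (fun n : ℕ => μv (Sset k 0 \ Sset k (1 / (n + 1 : ℝ)))) atTop
        (𝓝 (μv (⋂ n : ℕ, Sset k 0 \ Sset k (1 / (n + 1 : ℝ))))) :=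
      tendsto_measure_iInter_atTop (fun n => (hC n).nullMeasurableSet) hanti ⟨0, hμvfin⟩
    rw [hiInter, measure_empty] at hmeas
    obtain ⟨N, hN⟩ := (hmeas.eventually_lt_const hε').exists
    refine ⟨1 / (N + 1 : ℝ), by positivity, ?_⟩
    rw [← hμvA (hC N) Set.diff_subset]
    exact hN
  -- Pointwise norm of `RSop`.
  have hRSnorm : ∀ {s : ℝ}, 0 < s → ∀ (x : En k × ℝ),
      (‖RSop k p τ y η s u₀ x‖₊ : ℝ≥0∞) ^ p
        = ENNReal.ofReal ((s ^ (τ * k / p + 1 / p)) ^ p)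
            * (‖u₀ (Tmap k τ s y x)‖₊ : ℝ≥0∞) ^ p := by
    intro s hs x
    have hsp : (0 : ℝ) < s ^ (τ * k / p + 1 / p) := Real.rpow_pos_of_pos hs _
    have hnorm : ‖RSop k p τ y η s u₀ x‖
        = s ^ (τ * k / p + 1 / p) * ‖u₀ (Tmap k τ s y x)‖ := by
      show ‖((s ^ (τ * k / p + 1 / p) : ℝ) : ℂ) *
          Complex.exp (Complex.I * (s : ℂ) * ((inner ℝ x.1 η : ℝ) : ℂ)) *
          u₀ ((s ^ τ : ℝ) • (x.1 - y), s * x.2)‖ = _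
      rw [norm_mul, norm_mul, Complex.norm_real, Real.norm_eq_abs, abs_of_pos hsp]
      have hexp : ‖Complex.exp (Complex.I * (s : ℂ) * ((inner ℝ x.1 η : ℝ) : ℂ))‖ = 1 := by
        rw [Complex.norm_exp]
        have hre : (Complex.I * (s : ℂ) * ((inner ℝ x.1 η : ℝ) : ℂ)).re = 0 := by
          simp [Complex.mul_re, Complex.mul_im]
        rw [hre, Real.exp_zero]
      rw [hexp, mul_one]
      rfl
    rw [← enorm_eq_nnnorm, ← ofReal_norm, hnorm, ENNReal.ofReal_mul hsp.le,
      ENNReal.mul_rpow_of_nonneg _ _ hp0.le, ← ENNReal.ofReal_rpow_of_pos hsp,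
      ofReal_norm, enorm_eq_nnnorm]
  -- The constant arising from the change of variables.
  have hconst : ∀ {s : ℝ}, 0 < s →
      (s ^ (τ * k / p + 1 / p)) ^ p * (((s : ℝ) ^ τ) ^ k)⁻¹ * s⁻¹ = 1 := by
    intro s hs
    have h1 : ((s : ℝ) ^ (τ * k / p + 1 / p)) ^ p = s ^ (τ * k + 1) := by
      rw [← Real.rpow_mul hs.le]
      congr 1
      field_simp
    have h2 : (((s : ℝ) ^ τ) ^ k) = s ^ (τ * k) := by
      rw [← Real.rpow_natCast (s ^ τ) k, ← Real.rpow_mul hs.le]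
    rw [h1, h2, ← Real.rpow_neg hs.le, ← Real.rpow_neg_one s, ← Real.rpow_add hs,
      ← Real.rpow_add hs, show τ * (k : ℝ) + 1 + -(τ * (k : ℝ)) + -1 = 0 by ring, Real.rpow_zero]
  -- The key identity: `RSop` has the same `p`-mass above level `c` as `u₀` above level `s c`.
  have hkey : ∀ {s : ℝ}, 0 < s → ∀ c : ℝ,
      (∫⁻ x in Sset k c, (‖RSop k p τ y η s u₀ x‖₊ : ℝ≥0∞) ^ p ∂volume) = Iu (s * c) := by
    intro s hs c
    have hgm : Measurable fun z : En k × ℝ => (‖u₀ z‖₊ : ℝ≥0∞) ^ p :=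
      hu₀m.measurable.enorm.pow_const p
    calc ∫⁻ x in Sset k c, (‖RSop k p τ y η s u₀ x‖₊ : ℝ≥0∞) ^ p ∂volume
        = ∫⁻ x in Sset k c, ENNReal.ofReal ((s ^ (τ * k / p + 1 / p)) ^ p)
            * (‖u₀ (Tmap k τ s y x)‖₊ : ℝ≥0∞) ^ p ∂volume :=
          lintegral_congr fun x => hRSnorm hs x
      _ = ENNReal.ofReal ((s ^ (τ * k / p + 1 / p)) ^ p)
            * ∫⁻ x in Sset k c, (‖u₀ (Tmap k τ s y x)‖₊ : ℝ≥0∞) ^ p ∂volume :=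
          lintegral_const_mul' _ _ ENNReal.ofReal_ne_top
      _ = ENNReal.ofReal ((s ^ (τ * k / p + 1 / p)) ^ p)
            * (ENNReal.ofReal ((((s : ℝ) ^ τ) ^ k)⁻¹ * s⁻¹) * Iu (s * c)) := by
          rw [cov k hs y hgm c]
      _ = Iu (s * c) := by
          rw [← mul_assoc, ← ENNReal.ofReal_mul (by positivity), ← mul_assoc, hconst hs,
            ENNReal.ofReal_one, one_mul]
  -- Now the main argument.
  rw [NormedAddCommGroup.tendsto_nhds_zero]
  intro ε hε
  set Au : ℝ≥0∞ := (Iu 0) ^ (1 / p) with hAudef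
  have hAu : Au ≠ ⊤ := ENNReal.rpow_ne_top_of_nonneg (by positivity) hIu0
  set Bv : ℝ≥0∞ := (Jv (Sset k 0)) ^ (1 / q) with hBvdef
  have hBv : Bv ≠ ⊤ := ENNReal.rpow_ne_top_of_nonneg (by positivity) hJv0
  set E2 : ℝ≥0∞ := ENNReal.ofReal (ε / 3) with hE2def
  have hE2 : 0 < E2 := ENNReal.ofReal_pos.2 (by positivity)
  have hAu1 : Au + 1 ≠ ⊤ := ENNReal.add_ne_top.2 ⟨hAu, ENNReal.one_ne_top⟩
  have hBv1 : Bv + 1 ≠ ⊤ := ENNReal.add_ne_top.2 ⟨hBv, ENNReal.one_ne_top⟩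
  have hεv : 0 < (E2 / (Au + 1)) ^ q := by
    apply ENNReal.rpow_pos
    · exact ENNReal.div_pos hE2.ne' hAu1
    · exact ne_of_lt (ENNReal.div_lt_top ENNReal.ofReal_ne_top
        (by simp : Au + 1 ≠ 0))
  obtain ⟨δ, hδ0, hδ⟩ := hsmall _ hεv
  have hεu : 0 < (E2 / (Bv + 1)) ^ p := by
    apply ENNReal.rpow_pos
    · exact ENNReal.div_pos hE2.ne' hBv1
    · exact ne_of_lt (ENNReal.div_lt_top ENNReal.ofReal_ne_top
        (by simp : Bv + 1 ≠ 0))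
  obtain ⟨c0, hc00, hc0⟩ := htail _ hεu
  filter_upwards [eventually_ge_atTop (max 1 (c0 / δ))] with s hsge
  have hs1 : (1 : ℝ) ≤ s := le_trans (le_max_left _ _) hsge
  have hs : (0 : ℝ) < s := lt_of_lt_of_le one_pos hs1
  have hsδ : c0 ≤ s * δ := by
    have h := le_trans (le_max_right _ _) hsge
    calc c0 = (c0 / δ) * δ := by field_simp
      _ ≤ s * δ := mul_le_mul_of_nonneg_right h hδ0.le
  have hTm := Tmap_measurable k τ s y
  have hmap := Tmap_map k (τ := τ) hs y
  -- Replace `u` by its measurable representative inside the integral.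
  have hae : RSop k p τ y η s u =ᵐ[volume.restrict (Sset k 0)] RSop k p τ y η s u₀ := by
    set N : Set (En k × ℝ) := {z | u z ≠ u₀ z} with hNdef
    set M : Set (En k × ℝ) := toMeasurable (volume.restrict (Sset k 0)) N with hMdef
    have hMmeas : MeasurableSet M := measurableSet_toMeasurable _ _
    have hMnull : (volume.restrict (Sset k 0)) M = 0 := by
      rw [hMdef, measure_toMeasurable]
      exact huu₀
    have hvolM : volume (M ∩ Sset k 0) = 0 := by
      rw [← Measure.restrict_apply hMmeas]
      exact hMnull
    have hpre0 : volume (Tmap k τ s y ⁻¹' (M ∩ Sset k 0)) = 0 := by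
      have happ := Measure.map_apply (μ := (volume : Measure (En k × ℝ))) hTm
        (hMmeas.inter (Sset_measurable k 0))
      rw [hmap] at happ
      have : (ENNReal.ofReal ((((s : ℝ) ^ τ) ^ k)⁻¹ * s⁻¹) • (volume : Measure (En k × ℝ)))
          (M ∩ Sset k 0) = 0 := by
        rw [Measure.smul_apply, hvolM, smul_zero]
      exact happ.symm.trans this
    have h0 : ∀ᵐ x ∂(volume : Measure (En k × ℝ)),
        x ∉ Tmap k τ s y ⁻¹' (M ∩ Sset k 0) := measure_eq_zero_iff_ae_notMem.mp hpre0
    refine (ae_restrict_iff' (Sset_measurable k 0)).mpr ?_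
    filter_upwards [h0] with x hx hxS
    have hz : u (Tmap k τ s y x) = u₀ (Tmap k τ s y x) := by
      by_contra hne
      apply hx
      refine ⟨subset_toMeasurable _ _ hne, ?_⟩
      have : (0 : ℝ) < x.2 := hxS
      exact mul_pos hs this
    show ((s ^ (τ * k / p + 1 / p) : ℝ) : ℂ) * _ * u ((s ^ τ : ℝ) • (x.1 - y), s * x.2)
        = ((s ^ (τ * k / p + 1 / p) : ℝ) : ℂ) * _ * u₀ ((s ^ τ : ℝ) • (x.1 - y), s * x.2)
    rw [show u ((s ^ τ : ℝ) • (x.1 - y), s * x.2) = u₀ ((s ^ τ : ℝ) • (x.1 - y), s * x.2) from hz]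
  have hcongr_int : ∫ x in Sset k 0, RSop k p τ y η s u x * v x
      = ∫ x in Sset k 0, RSop k p τ y η s u₀ x * v x :=
    integral_congr_ae (hae.mono fun x hx => by dsimp only; rw [hx])
  show ‖∫ x in Sset k 0, RSop k p τ y η s u x * v x‖ < ε
  rw [hcongr_int]
  -- Measurability of `RSop u₀`.
  have hRSm : Measurable (RSop k p τ y η s u₀) := by
    have hinner : Measurable fun x : En k × ℝ => ((inner ℝ x.1 η : ℝ) : ℂ) :=
      Complex.measurable_ofReal.comp (continuous_fst.inner continuous_const).measurable
    have : RSop k p τ y η s u₀ = fun x : En k × ℝ =>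
        ((s ^ (τ * k / p + 1 / p) : ℝ) : ℂ) *
          Complex.exp (Complex.I * (s : ℂ) * ((inner ℝ x.1 η : ℝ) : ℂ)) *
          u₀ (Tmap k τ s y x) := rfl
    rw [this]
    exact (measurable_const.mul
      (Complex.measurable_exp.comp (hinner.const_mul _))).mul (hu₀m.measurable.comp hTm)
  set f1 : En k × ℝ → ℝ≥0∞ := fun x => (‖RSop k p τ y η s u₀ x‖₊ : ℝ≥0∞) with hf1def
  set g1 : En k × ℝ → ℝ≥0∞ := fun x => (‖v x‖₊ : ℝ≥0∞) with hg1def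
  have hg1ae : AEMeasurable g1 (volume.restrict (Sset k 0)) := hv'.1.enorm
  -- Hölder on a measurable subset of the half space.
  have hHolder : ∀ (A : Set (En k × ℝ)), MeasurableSet A → A ⊆ Sset k 0 →
      ∫⁻ x in A, f1 x * g1 x ∂volume
        ≤ (∫⁻ x in A, f1 x ^ p ∂volume) ^ (1 / p) * (∫⁻ x in A, g1 x ^ q ∂volume) ^ (1 / q) := by
    intro A hA hsub
    have hg1A : AEMeasurable g1 (volume.restrict A) :=
      hg1ae.mono_measure (Measure.restrict_mono hsub le_rfl)
    have := ENNReal.lintegral_mul_le_Lp_mul_Lq (volume.restrict A) hpq'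
      (hRSm.enorm.aemeasurable) hg1A
    exact this
  -- Split the integral.
  have hsplit : ∫⁻ x in Sset k 0, f1 x * g1 x ∂volume
      = (∫⁻ x in Sset k 0 \ Sset k δ, f1 x * g1 x ∂volume)
        + ∫⁻ x in Sset k δ, f1 x * g1 x ∂volume := by
    rw [← lintegral_union (Sset_measurable k δ) disjoint_sdiff_self_left,
      Set.diff_union_self, Set.union_eq_self_of_subset_right (Sset_mono k hδ0.le)]
  -- Bound the boundary piece.
  have hb1 : ∫⁻ x in Sset k 0 \ Sset k δ, f1 x * g1 x ∂volume ≤ E2 := by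
    refine le_trans (hHolder _ ((Sset_measurable k 0).diff (Sset_measurable k δ))
      Set.diff_subset) ?_
    have hfA : (∫⁻ x in Sset k 0 \ Sset k δ, f1 x ^ p ∂volume) ^ (1 / p) ≤ Au := by
      rw [hAudef]
      apply ENNReal.rpow_le_rpow _ (by positivity)
      calc ∫⁻ x in Sset k 0 \ Sset k δ, f1 x ^ p ∂volume
          ≤ ∫⁻ x in Sset k 0, f1 x ^ p ∂volume := lintegral_mono_set Set.diff_subset
        _ = Iu (s * 0) := hkey hs 0
        _ = Iu 0 := by rw [mul_zero]
    have hgA : (∫⁻ x in Sset k 0 \ Sset k δ, g1 x ^ q ∂volume) ^ (1 / q) ≤ E2 / (Au + 1) := by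
      have h1 : (∫⁻ x in Sset k 0 \ Sset k δ, g1 x ^ q ∂volume) ^ (1 / q)
          ≤ ((E2 / (Au + 1)) ^ q) ^ (1 / q) :=
        ENNReal.rpow_le_rpow hδ.le (by positivity)
      rwa [← ENNReal.rpow_mul, mul_one_div, div_self hq0.ne', ENNReal.rpow_one] at h1
    calc (∫⁻ x in Sset k 0 \ Sset k δ, f1 x ^ p ∂volume) ^ (1 / p)
          * (∫⁻ x in Sset k 0 \ Sset k δ, g1 x ^ q ∂volume) ^ (1 / q)
        ≤ Au * (E2 / (Au + 1)) := mul_le_mul' hfA hgA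
      _ ≤ (Au + 1) * (E2 / (Au + 1)) := mul_le_mul_left le_self_add _
      _ ≤ E2 := ENNReal.mul_div_le
  -- Bound the tail piece.
  have hb2 : ∫⁻ x in Sset k δ, f1 x * g1 x ∂volume ≤ E2 := by
    refine le_trans (hHolder _ (Sset_measurable k δ) (Sset_mono k hδ0.le)) ?_
    have hfA : (∫⁻ x in Sset k δ, f1 x ^ p ∂volume) ^ (1 / p) ≤ E2 / (Bv + 1) := by
      have h1 : (∫⁻ x in Sset k δ, f1 x ^ p ∂volume) ^ (1 / p)
          ≤ ((E2 / (Bv + 1)) ^ p) ^ (1 / p) := by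
        apply ENNReal.rpow_le_rpow _ (by positivity)
        rw [hkey hs δ]
        exact (hc0 _ hsδ).le
      rwa [← ENNReal.rpow_mul, mul_one_div, div_self hp0.ne', ENNReal.rpow_one] at h1
    have hgA : (∫⁻ x in Sset k δ, g1 x ^ q ∂volume) ^ (1 / q) ≤ Bv := by
      rw [hBvdef]
      apply ENNReal.rpow_le_rpow _ (by positivity)
      exact lintegral_mono_set (Sset_mono k hδ0.le)
    calc (∫⁻ x in Sset k δ, f1 x ^ p ∂volume) ^ (1 / p)
          * (∫⁻ x in Sset k δ, g1 x ^ q ∂volume) ^ (1 / q)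
        ≤ (E2 / (Bv + 1)) * Bv := mul_le_mul' hfA hgA
      _ ≤ (E2 / (Bv + 1)) * (Bv + 1) := mul_le_mul_right le_self_add _
      _ ≤ E2 := by rw [mul_comm]; exact ENNReal.mul_div_le
  -- Put everything together.
  have hmain : ∫⁻ x in Sset k 0, f1 x * g1 x ∂volume ≤ ENNReal.ofReal (ε / 3 + ε / 3) := by
    rw [hsplit, ENNReal.ofReal_add (by positivity) (by positivity)]
    exact add_le_add hb1 hb2
  calc ‖∫ x in Sset k 0, RSop k p τ y η s u₀ x * v x‖
      ≤ (∫⁻ x in Sset k 0, ENNReal.ofReal ‖RSop k p τ y η s u₀ x * v x‖ ∂volume).toReal :=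
        norm_integral_le_lintegral_norm _
    _ = (∫⁻ x in Sset k 0, f1 x * g1 x ∂volume).toReal := by
        congr 1
        refine lintegral_congr fun x => ?_
        rw [ofReal_norm, enorm_eq_nnnorm, nnnorm_mul, ENNReal.coe_mul]
    _ ≤ ε / 3 + ε / 3 := ENNReal.toReal_le_of_le_ofReal (by positivity) hmain
    _ < ε := by linarith

end
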